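/- With R_n(z) the 2N×2N transfer matrix polynomial with blocks R_n(z)_{11} = κ_n^{-1}·P_n(z), R_n(z)_{12} = (2πi·κ_n)^{-1}·Q_n(z), R_n(z)_{21} = −2πi·κ_{n-1}*·P_{n-1}(z), R_n(z)_{22} = −κ_{n-1}*·Q_{n-1}(z), one has det R_n(z) = 1 for every n ≥ 1 and every z ∈ ℂ. -/

import Mathlib

open MeasureTheory Matrix Complex Finset
open scoped ComplexOrder

/-- Entrywise integral of a matrix-valued function over an interval `(a, b)`. -/
noncomputable def mint {N : ℕ} (a b : ℝ) (F : ℝ → Matrix (Fin N) (Fin N) ℂ) :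
    Matrix (Fin N) (Fin N) ℂ :=
  Matrix.of fun i j => ∫ x in a..b, F x i j

namespace Stmt5Aux

abbrev Mx (N : ℕ) := Matrix (Fin N) (Fin N) ℂ

noncomputable def SI {N : ℕ} (a b : ℝ) (F : ℝ → Mx N) : Mx N :=
  Matrix.of fun i j => ∫ x in Set.Ioo a b, F x i j

def IntOn {N : ℕ} (a b : ℝ) (F : ℝ → Mx N) : Prop :=
  ∀ i j, IntegrableOn (fun x => F x i j) (Set.Ioo a b) volume

noncomputable def pf {N : ℕ} (c : ℕ → Mx N) (d : ℕ) (z : ℂ) : Mx N :=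
  ∑ j ∈ Finset.range (d+1), z ^ j • c j

noncomputable def qq {N : ℕ} (c : ℕ → Mx N) (d : ℕ) (z : ℂ) (k : ℕ) : Mx N :=
  ∑ i ∈ Finset.range (d - k), z ^ i • c (k+1+i)

lemma mint_eq_SI {N : ℕ} {a b : ℝ} (hab : a ≤ b) (F : ℝ → Mx N) :
    mint a b F = SI a b F := by
  ext i j
  show (∫ x in a..b, F x i j) = _
  rw [intervalIntegral.integral_of_le hab]
  show (∫ x in Set.Ioc a b, F x i j) = ∫ x in Set.Ioo a b, F x i j
  rw [← Measure.restrict_congr_set Ioo_ae_eq_Ioc]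

lemma SI_congr_ae {N : ℕ} {a b : ℝ} {F G : ℝ → Mx N}
    (h : ∀ᵐ x ∂(volume.restrict (Set.Ioo a b)), F x = G x) : SI a b F = SI a b G := by
  ext i j
  exact integral_congr_ae (h.mono fun x hx => by simp only [hx])

lemma IntOn.add {N : ℕ} {a b : ℝ} {F G : ℝ → Mx N} (hF : IntOn a b F) (hG : IntOn a b G) :
    IntOn a b (fun x => F x + G x) := fun i j => by
  exact (hF i j).add (hG i j)

lemma IntOn.sum {N : ℕ} {a b : ℝ} {ι : Type*} (s : Finset ι) (F : ι → ℝ → Mx N)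
    (hF : ∀ i ∈ s, IntOn a b (F i)) : IntOn a b (fun x => ∑ i ∈ s, F i x) := fun i j => by
  have : (fun x => (∑ k ∈ s, F k x) i j) = fun x => ∑ k ∈ s, F k x i j := by
    funext x; simp [Matrix.sum_apply]
  rw [IntegrableOn, this]
  exact integrable_finset_sum s fun k hk => hF k hk i j

lemma IntOn.constMul {N : ℕ} {a b : ℝ} {F : ℝ → Mx N} (hF : IntOn a b F) (L : Mx N) :
    IntOn a b (fun x => L * F x) := fun i j => by
  have : (fun x => (L * F x) i j) = fun x => ∑ v : Fin N, L i v * F x v j := by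
    funext x; simp [Matrix.mul_apply]
  rw [IntegrableOn, this]
  exact integrable_finset_sum _ fun v _ => (hF v j).const_mul _

lemma IntOn.mulConst {N : ℕ} {a b : ℝ} {F : ℝ → Mx N} (hF : IntOn a b F) (R : Mx N) :
    IntOn a b (fun x => F x * R) := fun i j => by
  have : (fun x => (F x * R) i j) = fun x => ∑ v : Fin N, F x i v * R v j := by
    funext x; simp [Matrix.mul_apply]
  rw [IntegrableOn, this]
  exact integrable_finset_sum _ fun v _ => (hF i v).mul_const _

lemma SI_sum {N : ℕ} {a b : ℝ} {ι : Type*} (s : Finset ι) (F : ι → ℝ → Mx N)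
    (hF : ∀ i ∈ s, IntOn a b (F i)) :
    SI a b (fun x => ∑ i ∈ s, F i x) = ∑ i ∈ s, SI a b (F i) := by
  ext i j
  show (∫ x in Set.Ioo a b, (∑ k ∈ s, F k x) i j) = (∑ k ∈ s, SI a b (F k)) i j
  have : (fun x => (∑ k ∈ s, F k x) i j) = fun x => ∑ k ∈ s, F k x i j := by
    funext x; simp [Matrix.sum_apply]
  rw [this, integral_finset_sum s fun k hk => hF k hk i j]
  simp [SI, Matrix.sum_apply]

lemma SI_constMul {N : ℕ} {a b : ℝ} {F : ℝ → Mx N} (hF : IntOn a b F) (L : Mx N) :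
    SI a b (fun x => L * F x) = L * SI a b F := by
  ext i j
  show (∫ x in Set.Ioo a b, (L * F x) i j) = (L * SI a b F) i j
  have : (fun x => (L * F x) i j) = fun x => ∑ v : Fin N, L i v * F x v j := by
    funext x; simp [Matrix.mul_apply]
  rw [this, integral_finset_sum _ fun v _ => (hF v j).const_mul _]
  simp only [Matrix.mul_apply, SI, Matrix.of_apply]
  exact Finset.sum_congr rfl fun v _ => integral_const_mul _ _

lemma SI_mulConst {N : ℕ} {a b : ℝ} {F : ℝ → Mx N} (hF : IntOn a b F) (R : Mx N) :
    SI a b (fun x => F x * R) = SI a b F * R := by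
  ext i j
  show (∫ x in Set.Ioo a b, (F x * R) i j) = (SI a b F * R) i j
  have : (fun x => (F x * R) i j) = fun x => ∑ v : Fin N, F x i v * R v j := by
    funext x; simp [Matrix.mul_apply]
  rw [this, integral_finset_sum _ fun v _ => (hF i v).mul_const _]
  simp only [Matrix.mul_apply, SI, Matrix.of_apply]
  exact Finset.sum_congr rfl fun v _ => integral_mul_const _ _


section Analytic

variable {N : ℕ} {a b : ℝ} {W : ℝ → Mx N}
  (hWcont : ContinuousOn W (Set.Ioo a b))
  (hWmom : ∀ (n : ℕ) (i j : Fin N),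
      IntegrableOn (fun x : ℝ => |x| ^ n * ‖W x i j‖) (Set.Ioo a b))

noncomputable def Jm (a b : ℝ) (W : ℝ → Mx N) (m : ℕ) : Mx N :=
  SI a b (fun x => (x : ℂ) ^ m • W x)

include hWcont hWmom in
lemma int_base (m : ℕ) (i j : Fin N) :
    IntegrableOn (fun x : ℝ => (x : ℂ) ^ m * W x i j) (Set.Ioo a b) volume := by
  have hmeas : AEStronglyMeasurable (fun x : ℝ => (x : ℂ) ^ m * W x i j)
      (volume.restrict (Set.Ioo a b)) := by
    apply ContinuousOn.aestronglyMeasurable ?_ measurableSet_Ioo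
    apply ContinuousOn.mul
    · exact (Continuous.pow (Complex.continuous_ofReal) m).continuousOn
    · exact ((continuous_apply j).comp (continuous_apply i)).comp_continuousOn hWcont
  apply Integrable.mono' (hWmom m i j) hmeas
  refine Filter.Eventually.of_forall fun x => ?_
  have : ‖(x : ℂ) ^ m * W x i j‖ = |x| ^ m * ‖W x i j‖ := by
    rw [norm_mul, norm_pow, Complex.norm_real, Real.norm_eq_abs]
  rw [this]

include hWcont hWmom in
lemma intOn_powW (m : ℕ) : IntOn a b (fun x => (x : ℂ) ^ m • W x) := by
  intro i j
  have : (fun x : ℝ => ((x:ℂ) ^ m • W x) i j) = fun x : ℝ => (x : ℂ) ^ m * W x i j := by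
    funext x; simp [Matrix.smul_apply, smul_eq_mul]
  rw [IntegrableOn, this]
  exact int_base hWcont hWmom m i j

include hWcont hWmom in
lemma intOn_LWR (m : ℕ) (L R : Mx N) : IntOn a b (fun x => L * ((x : ℂ) ^ m • W x) * R) :=
  ((intOn_powW hWcont hWmom m).constMul L).mulConst R

include hWcont hWmom in
lemma mint_trans (c e : ℕ → Mx N) (d d' : ℕ) (hab : a ≤ b) :
    mint a b (fun x => pf c d x * W x * pf e d' x) =
      ∑ j ∈ Finset.range (d+1), ∑ k ∈ Finset.range (d'+1),
        c j * Jm a b W (j+k) * e k := by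
  rw [mint_eq_SI hab]
  have hptw : ∀ x : ℝ, pf c d (x:ℂ) * W x * pf e d' (x:ℂ) =
      ∑ j ∈ Finset.range (d+1), ∑ k ∈ Finset.range (d'+1),
        c j * ((x:ℂ) ^ (j+k) • W x) * e k := by
    intro x
    simp only [pf, Finset.sum_mul, Finset.mul_sum, smul_mul_assoc, mul_smul_comm,
      smul_smul, pow_add, Finset.smul_sum]
    rw [Finset.sum_comm]
    refine Finset.sum_congr rfl fun j _ => Finset.sum_congr rfl fun k _ => ?_
    rw [mul_comm]
  have : (fun x : ℝ => pf c d (x:ℂ) * W x * pf e d' (x:ℂ)) = fun x : ℝ =>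
      ∑ j ∈ Finset.range (d+1), ∑ k ∈ Finset.range (d'+1),
        c j * ((x:ℂ) ^ (j+k) • W x) * e k := funext hptw
  rw [this, SI_sum _ _ (fun j _ => IntOn.sum _ _ fun k _ => intOn_LWR hWcont hWmom (j+k) (c j) (e k))]
  refine Finset.sum_congr rfl fun j _ => ?_
  rw [SI_sum _ _ (fun k _ => intOn_LWR hWcont hWmom (j+k) (c j) (e k))]
  refine Finset.sum_congr rfl fun k _ => ?_
  rw [show (fun x : ℝ => c j * ((x:ℂ) ^ (j+k) • W x) * e k) = fun x : ℝ => (fun y : ℝ => c j * ((y:ℂ) ^ (j+k) • W y)) x * e k from rfl,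
     SI_mulConst ((intOn_powW hWcont hWmom (j+k)).constMul (c j)) (e k),
     SI_constMul (intOn_powW hWcont hWmom (j+k)) (c j)]
  rfl


lemma Jm_herm (hWpos : ∀ x ∈ Set.Ioo a b, (W x).PosDef) (m : ℕ) :
    (Jm a b W m)ᴴ = Jm a b W m := by
  ext i j
  rw [Matrix.conjTranspose_apply]
  show star (∫ x in Set.Ioo a b, ((x:ℂ)^m • W x) j i) = ∫ x in Set.Ioo a b, ((x:ℂ)^m • W x) i j
  have h1 : ∀ x : ℝ, ((x:ℂ)^m • W x) j i = (x:ℂ)^m * W x j i := fun x => rfl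
  have h2 : ∀ x : ℝ, ((x:ℂ)^m • W x) i j = (x:ℂ)^m * W x i j := fun x => rfl
  simp only [h1, h2]
  rw [show (star (∫ x in Set.Ioo a b, (x:ℂ)^m * W x j i) : ℂ)
      = (starRingEnd ℂ) (∫ x in Set.Ioo a b, (x:ℂ)^m * W x j i) from rfl]
  rw [← integral_conj]
  apply setIntegral_congr_fun measurableSet_Ioo
  intro x hx
  have hH := (hWpos x hx).1
  have : star (W x j i) = W x i j := by
    conv_rhs => rw [← hH]
    rfl
  show (starRingEnd ℂ) ((x:ℂ)^m * W x j i) = (x:ℂ)^m * W x i j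
  rw [RingHom.map_mul, map_pow, Complex.conj_ofReal,
    show (starRingEnd ℂ) (W x j i) = star (W x j i) from rfl, this]

end Analytic

section PolyAlg

variable {N : ℕ}

/-- coefficient shift: coefficients of `z * p(z)`. -/
def shf (c : ℕ → Mx N) : ℕ → Mx N := fun k => match k with
  | 0 => 0
  | (m+1) => c m

lemma sumext {β : Type*} [AddCommMonoid β] {d d' : ℕ} (f : ℕ → β)
    (hd : ∀ j, d < j → f j = 0) (h : d ≤ d') :
    ∑ j ∈ Finset.range (d'+1), f j = ∑ j ∈ Finset.range (d+1), f j := by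
  refine (Finset.sum_subset (Finset.range_subset_range.mpr (by omega)) ?_).symm
  intro x hx hnx
  simp only [Finset.mem_range] at hx hnx
  exact hd x (by omega)

lemma pf_ext {d d' : ℕ} (c : ℕ → Mx N) (hd : ∀ j, d < j → c j = 0) (h : d ≤ d') (z : ℂ) :
    pf c d' z = pf c d z := by
  rw [pf, pf]
  exact sumext (fun j => z^j • c j) (fun j hj => by rw [hd j hj, smul_zero]) h

lemma pf_add (c e : ℕ → Mx N) (d : ℕ) (z : ℂ) :
    pf (fun k => c k + e k) d z = pf c d z + pf e d z := by
  simp [pf, smul_add, Finset.sum_add_distrib]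

lemma pf_constMul (B : Mx N) (c : ℕ → Mx N) (d : ℕ) (z : ℂ) :
    pf (fun k => B * c k) d z = B * pf c d z := by
  simp [pf, Finset.mul_sum, mul_smul_comm]

lemma pf_shf (c : ℕ → Mx N) (d : ℕ) (z : ℂ) :
    pf (shf c) (d+1) z = z • pf c d z := by
  rw [pf, Finset.sum_range_succ', pf, Finset.smul_sum]
  simp [shf, pow_succ', smul_smul]
lemma qq_top {d k : ℕ} (c : ℕ → Mx N) (z : ℂ) (h : d ≤ k) : qq c d z k = 0 := by
  rw [qq, Nat.sub_eq_zero_of_le h]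
  simp

lemma qq_add (c e : ℕ → Mx N) (d : ℕ) (z : ℂ) (k : ℕ) :
    qq (fun k => c k + e k) d z k = qq c d z k + qq e d z k := by
  simp [qq, smul_add, Finset.sum_add_distrib]

lemma qq_constMul (B : Mx N) (c : ℕ → Mx N) (d : ℕ) (z : ℂ) (k : ℕ) :
    qq (fun k => B * c k) d z k = B * qq c d z k := by
  simp [qq, Finset.mul_sum, mul_smul_comm]

lemma qq_ext {d d' : ℕ} (c : ℕ → Mx N) (hd : ∀ j, d < j → c j = 0) (h : d ≤ d') (z : ℂ)
    (k : ℕ) : qq c d' z k = qq c d z k := by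
  rw [qq, qq]
  refine (Finset.sum_subset (Finset.range_subset_range.mpr (by omega)) ?_).symm
  intro x hx hnx
  simp only [Finset.mem_range] at hx hnx
  rw [hd (k+1+x) (by omega), smul_zero]

lemma qq_succ {d k : ℕ} (c : ℕ → Mx N) (z : ℂ) (hk : k ≤ d) :
    qq c (d+1) z k = qq c d z k + z^(d-k) • c (d+1) := by
  rw [qq, qq, show d+1-k = (d-k)+1 by omega, Finset.sum_range_succ,
    show k+1+(d-k) = d+1 by omega]

lemma qq_shf {d k : ℕ} (c : ℕ → Mx N) (z : ℂ) (hk : k ≤ d) :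
    qq (shf c) (d+1) z k = c k + z • qq c d z k := by
  rw [qq, qq, show d+1-k = (d-k)+1 by omega, Finset.sum_range_succ', Finset.smul_sum]
  have h0 : (z:ℂ)^0 • shf c (k+1+0) = c k := by
    simp [shf, show k+1+0 = k+1 from rfl]
  rw [h0, add_comm]
  congr 1
  refine Finset.sum_congr rfl fun i _ => ?_
  rw [show k+1+(i+1) = (k+1+i)+1 by omega]
  simp [shf, pow_succ', smul_smul]

/-- divided difference identity -/
lemma pf_sub (c : ℕ → Mx N) (d : ℕ) (t z : ℂ) :
    pf c d t - pf c d z = (t - z) • pf (qq c d z) d t := by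
  induction d with
  | zero =>
      simp [pf, qq]
  | succ d ih =>
      have hL : pf c (d+1) t - pf c (d+1) z
          = (pf c d t - pf c d z) + (t^(d+1) - z^(d+1)) • c (d+1) := by
        rw [pf, pf, Finset.sum_range_succ (f := fun j => t^j • c j),
          Finset.sum_range_succ (f := fun j => z^j • c j), sub_smul, ← pf, ← pf]
        abel
      have hR : pf (qq c (d+1) z) (d+1) t
          = pf (qq c d z) d t + (∑ k ∈ Finset.range (d+1), t^k * z^(d-k)) • c (d+1) := by
        rw [pf, Finset.sum_range_succ, qq_top c z (le_refl (d+1)), smul_zero, add_zero]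
        have : ∀ k ∈ Finset.range (d+1), t^k • qq c (d+1) z k
            = t^k • qq c d z k + (t^k * z^(d-k)) • c (d+1) := by
          intro k hk
          simp only [Finset.mem_range] at hk
          rw [qq_succ c z (by omega), smul_add, smul_smul]
        rw [Finset.sum_congr rfl this, Finset.sum_add_distrib, ← pf, ← Finset.sum_smul]
      rw [hL, hR, smul_add, ← ih, smul_smul]
      congr 2
      rw [mul_comm]
      have := geom_sum₂_mul t z (d+1)
      simp only [show d+1-1 = d from rfl] at this
      rw [show (∑ k ∈ Finset.range (d+1), t^k * z^(d-k)) = ∑ i ∈ Finset.range (d+1), t^i * z^(d+1-1-i) from Finset.sum_congr rfl (fun i hi => by norm_num)]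
      exact (geom_sum₂_mul t z (d+1)).symm


end PolyAlg

section Alg

variable {N : ℕ} (J : ℕ → Mx N) (A : ℕ → ℕ → Mx N)

/-- pairing of a polynomial (coefficients `c`, degree `d`) with the monomial `x^k`. -/
noncomputable def ee (c : ℕ → Mx N) (d k : ℕ) : Mx N :=
  ∑ j ∈ Finset.range (d+1), c j * J (j+k)

/-- squared-norm-type quantity. -/
noncomputable def gv (n : ℕ) : Mx N :=
  ∑ j ∈ Finset.range (n+1), ∑ k ∈ Finset.range (n+1), A n j * J (j+k) * (A n k)ᴴ

/-- value `∫ p W` of a polynomial against the weight. -/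
noncomputable def Qval (c : ℕ → Mx N) (d : ℕ) (z : ℂ) : Mx N :=
  ∑ k ∈ Finset.range (d+1), qq c d z k * J k

variable (hJ : ∀ m, (J m)ᴴ = J m)
  (hA1 : ∀ n, A n n = 1)
  (hA0 : ∀ n k, n < k → A n k = 0)
  (horthJ : ∀ n j, j < n → ee J (A n) n j = 0)

/-- inner products against the polynomials via double sums -/
lemma double_ee (c e : ℕ → Mx N) (d d' : ℕ) :
    ∑ j ∈ Finset.range (d+1), ∑ k ∈ Finset.range (d'+1), c j * J (j+k) * (e k)ᴴ
      = ∑ k ∈ Finset.range (d'+1), ee J c d k * (e k)ᴴ := by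
  rw [Finset.sum_comm]
  refine Finset.sum_congr rfl fun k _ => ?_
  rw [ee, Finset.sum_mul]

include horthJ hA1 in
lemma gv_eq (n : ℕ) : gv J A n = ee J (A n) n n := by
  rw [gv, double_ee, Finset.sum_range_succ, hA1, Matrix.conjTranspose_one, mul_one]
  rw [Finset.sum_eq_zero fun k hk => ?_, zero_add]
  rw [horthJ n k (Finset.mem_range.mp hk), zero_mul]

lemma ee_add (c e : ℕ → Mx N) (d k : ℕ) :
    ee J (fun j => c j + e j) d k = ee J c d k + ee J e d k := by
  simp [ee, add_mul, Finset.sum_add_distrib]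

lemma ee_sub (c e : ℕ → Mx N) (d k : ℕ) :
    ee J (fun j => c j - e j) d k = ee J c d k - ee J e d k := by
  simp [ee, sub_mul, Finset.sum_sub_distrib]

lemma ee_constMul (B : Mx N) (c : ℕ → Mx N) (d k : ℕ) :
    ee J (fun j => B * c j) d k = B * ee J c d k := by
  simp [ee, Finset.mul_sum, mul_assoc]

lemma ee_ext {d d' : ℕ} (c : ℕ → Mx N) (hd : ∀ j, d < j → c j = 0) (h : d ≤ d') (k : ℕ) :
    ee J c d' k = ee J c d k :=
  sumext (fun j => c j * J (j+k)) (fun j hj => by rw [hd j hj, zero_mul]) h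

lemma ee_shf (c : ℕ → Mx N) (d k : ℕ) :
    ee J (shf c) (d+1) k = ee J c d (k+1) := by
  rw [ee, Finset.sum_range_succ', ee]
  simp only [shf, zero_mul, add_zero]
  refine Finset.sum_congr rfl fun j _ => ?_
  rw [show j+1+k = j+(k+1) by omega]


include hA1 hA0 horthJ in
theorem recurrence (γ : ℕ → Mx N) (hγg : ∀ n, γ n * gv J A n = 1)
    (hnd : ∀ d (c : ℕ → Mx N),
      (∑ j ∈ Finset.range (d+1), ∑ k ∈ Finset.range (d+1), c j * J (j+k) * (c k)ᴴ) = 0 →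
      ∀ k, k ≤ d → c k = 0)
    (m : ℕ) :
    ∃ B C : Mx N, C = gv J A (m+1) * γ m ∧
      ∀ k, shf (A (m+1)) k = A (m+2) k + B * A (m+1) k + C * A m k := by
  have hgγ : ∀ n, gv J A n * γ n = 1 := fun n => mul_eq_one_comm.mp (hγg n)
  set C : Mx N := gv J A (m+1) * γ m with hC
  set B : Mx N := (ee J (A (m+1)) (m+1) (m+2) - ee J (A (m+2)) (m+2) (m+1)
    - C * ee J (A m) m (m+1)) * γ (m+1) with hB
  set h : ℕ → Mx N := fun k => shf (A (m+1)) k - A (m+2) k - B * A (m+1) k - C * A m k with hh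
  have heelin : ∀ k, ee J h (m+2) k = ee J (A (m+1)) (m+1) (k+1) - ee J (A (m+2)) (m+2) k
      - B * ee J (A (m+1)) (m+1) k - C * ee J (A m) m k := by
    intro k
    have hext1 : ee J (A (m+1)) (m+2) k = ee J (A (m+1)) (m+1) k :=
      ee_ext J (A (m+1)) (fun j hj => hA0 _ _ hj) (by omega) k
    have hext2 : ee J (A m) (m+2) k = ee J (A m) m k :=
      ee_ext J (A m) (fun j hj => hA0 _ _ hj) (by omega) k
    have hshf : ee J (shf (A (m+1))) (m+2) k = ee J (A (m+1)) (m+1) (k+1) :=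
      ee_shf J (A (m+1)) (m+1) k
    rw [← hshf, ← hext1, ← hext2]
    simp only [hh, ee, sub_mul, Finset.sum_sub_distrib, Finset.mul_sum, mul_assoc]
  have hee : ∀ k, k ≤ m+1 → ee J h (m+2) k = 0 := by
    intro k hk
    rw [heelin k]
    rcases show k < m ∨ k = m ∨ k = m+1 by omega with h'|h'|h'
    · rw [horthJ (m+1) (k+1) (by omega), horthJ (m+2) k (by omega),
        horthJ (m+1) k (by omega), horthJ m k (by omega)]
      simp
    · rw [h']
      rw [horthJ (m+2) m (by omega), horthJ (m+1) m (by omega),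
        ← gv_eq J A hA1 horthJ (m+1), ← gv_eq J A hA1 horthJ m]
      simp [hC, mul_assoc, hγg m]
    · subst h'
      rw [← gv_eq J A hA1 horthJ (m+1), hB, mul_assoc, hγg (m+1), mul_one]
      abel
  have htop : h (m+2) = 0 := by
    show shf (A (m+1)) (m+2) - A (m+2) (m+2) - B * A (m+1) (m+2) - C * A m (m+2) = 0
    rw [show shf (A (m+1)) (m+2) = A (m+1) (m+1) from rfl, hA1, hA1,
      hA0 (m+1) (m+2) (by omega), hA0 m (m+2) (by omega)]
    simp
  have hdz : ∑ j ∈ Finset.range (m+2+1), ∑ k ∈ Finset.range (m+2+1),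
      h j * J (j+k) * (h k)ᴴ = 0 := by
    rw [double_ee]
    refine Finset.sum_eq_zero fun k hk => ?_
    rcases Nat.lt_or_ge k (m+2) with h'|h'
    · rw [hee k (by omega), zero_mul]
    · have hk2 : k = m+2 := by simp only [Finset.mem_range] at hk; omega
      rw [hk2, htop]
      simp
  have hzero : ∀ k, k ≤ m+2 → h k = 0 := hnd (m+2) h hdz
  have hall : ∀ k, h k = 0 := by
    intro k
    rcases le_or_gt k (m+2) with h'|h'
    · exact hzero k h'
    · have h1 : shf (A (m+1)) k = 0 := by
        match k, h' with
        | (k'+1), h' => exact hA0 (m+1) k' (by omega)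
      show shf (A (m+1)) k - A (m+2) k - B * A (m+1) k - C * A m k = 0
      rw [h1, hA0 (m+2) k (by omega), hA0 (m+1) k (by omega), hA0 m k (by omega)]
      simp
  refine ⟨B, C, rfl, fun k => ?_⟩
  have h2 := sub_eq_zero.mp (hall k)
  rw [sub_sub, sub_eq_iff_eq_add] at h2
  rw [h2]
  abel


lemma qq_sub (c e : ℕ → Mx N) (d : ℕ) (z : ℂ) (k : ℕ) :
    qq (fun k => c k - e k) d z k = qq c d z k - qq e d z k := by
  simp [qq, smul_sub, Finset.sum_sub_distrib]

include hA0 in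
lemma pf_rec (B C : Mx N) (m : ℕ)
    (hrec : ∀ k, shf (A (m+1)) k = A (m+2) k + B * A (m+1) k + C * A m k) (z : ℂ) :
    z • pf (A (m+1)) (m+1) z
      = pf (A (m+2)) (m+2) z + B * pf (A (m+1)) (m+1) z + C * pf (A m) m z := by
  rw [← pf_shf (A (m+1)) (m+1) z]
  have h1 : shf (A (m+1)) = fun k => A (m+2) k + ((fun k => B * A (m+1) k) k
      + (fun k => C * A m k) k) := funext fun k => by rw [hrec k, add_assoc]
  rw [h1, pf_add, pf_add, pf_constMul, pf_constMul,
    pf_ext (A (m+1)) (fun j hj => hA0 _ _ hj) (by omega) z,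
    pf_ext (A m) (fun j hj => hA0 _ _ hj) (by omega) z]
  abel

include hA0 horthJ in
lemma qv_rec (B C : Mx N) (m : ℕ)
    (hrec : ∀ k, shf (A (m+1)) k = A (m+2) k + B * A (m+1) k + C * A m k) (z : ℂ) :
    z • Qval J (A (m+1)) (m+1) z
      = Qval J (A (m+2)) (m+2) z + B * Qval J (A (m+1)) (m+1) z
        + C * Qval J (A m) m z := by
  have hA2 : A (m+2) = fun k => (fun k => shf (A (m+1)) k - B * A (m+1) k) k
      - (fun k => C * A m k) k := funext fun k => by
    show A (m+2) k = (shf (A (m+1)) k - B * A (m+1) k) - C * A m k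
    rw [hrec k]; abel
  have hq2 : ∀ k, qq (A (m+2)) (m+2) z k = qq (shf (A (m+1))) (m+2) z k
      - B * qq (A (m+1)) (m+2) z k - C * qq (A m) (m+2) z k := by
    intro k
    conv_lhs => rw [hA2]
    rw [qq_sub, qq_sub, qq_constMul, qq_constMul]
  have hS1 : ∑ k ∈ Finset.range (m+2+1), qq (shf (A (m+1))) (m+2) z k * J k
      = z • Qval J (A (m+1)) (m+1) z := by
    rw [Finset.sum_range_succ, qq_top _ z (le_refl (m+2)), zero_mul, add_zero]
    have : ∀ k ∈ Finset.range (m+2), qq (shf (A (m+1))) (m+2) z k * J k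
        = A (m+1) k * J (k+0) + z • (qq (A (m+1)) (m+1) z k * J k) := by
      intro k hk
      simp only [Finset.mem_range] at hk
      rw [qq_shf (A (m+1)) z (by omega : k ≤ m+1), add_mul, smul_mul_assoc,
        show k+0 = k from rfl]
    rw [Finset.sum_congr rfl this, Finset.sum_add_distrib, ← Finset.smul_sum,
      ← Qval, show (∑ k ∈ Finset.range (m+2), A (m+1) k * J (k+0))
        = ee J (A (m+1)) (m+1) 0 from rfl, horthJ (m+1) 0 (by omega), zero_add]
  have hS2 : ∑ k ∈ Finset.range (m+2+1), qq (A (m+1)) (m+2) z k * J k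
      = Qval J (A (m+1)) (m+1) z := by
    rw [Finset.sum_range_succ]
    have hext : ∀ k, qq (A (m+1)) (m+2) z k = qq (A (m+1)) (m+1) z k :=
      qq_ext (A (m+1)) (fun j hj => hA0 _ _ hj) (by omega) z
    simp only [hext]
    rw [qq_top _ z (by omega), zero_mul, add_zero, ← Qval]
  have hS3 : ∑ k ∈ Finset.range (m+2+1), qq (A m) (m+2) z k * J k
      = Qval J (A m) m z := by
    rw [Finset.sum_range_succ, Finset.sum_range_succ]
    have hext : ∀ k, qq (A m) (m+2) z k = qq (A m) m z k :=
      qq_ext (A m) (fun j hj => hA0 _ _ hj) (by omega) z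
    simp only [hext]
    rw [qq_top _ z (by omega), qq_top _ z (by omega), zero_mul, zero_mul,
      add_zero, add_zero, ← Qval]
  have : Qval J (A (m+2)) (m+2) z = z • Qval J (A (m+1)) (m+1) z
      - B * Qval J (A (m+1)) (m+1) z - C * Qval J (A m) m z := by
    rw [Qval, Finset.sum_congr rfl (fun k _ => by rw [hq2 k, sub_mul, sub_mul, mul_assoc, mul_assoc]),
      Finset.sum_sub_distrib, Finset.sum_sub_distrib, ← Finset.mul_sum, ← Finset.mul_sum,
      hS1, hS2, hS3]
  rw [this]
  abel


end Alg

section Dets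

variable {N : ℕ}

lemma det_swapblocks : (fromBlocks (0:Mx N) 1 1 (0:Mx N)).det = (-1:ℂ)^N := by
  have factor : (fromBlocks (0:Mx N) 1 1 (0:Mx N))
      = fromBlocks 1 1 0 1 * fromBlocks 1 0 (-1) 1 * fromBlocks 1 1 0 1
        * fromBlocks (-1) 0 0 1 := by
    simp [Matrix.fromBlocks_multiply]
  rw [factor, det_mul, det_mul, det_mul, det_fromBlocks_zero₂₁, det_fromBlocks_zero₂₁,
    det_fromBlocks_zero₁₂]
  simp [Matrix.det_neg, Fintype.card_fin]

lemma det_AB10 (Am Bm : Mx N) : (fromBlocks Am Bm (1:Mx N) 0).det = (-1:ℂ)^N * Bm.det := by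
  have h : fromBlocks Am Bm (1:Mx N) 0
      = fromBlocks (0:Mx N) 1 1 0 * fromBlocks 1 0 Am Bm := by
    simp [Matrix.fromBlocks_multiply]
  rw [h, det_mul, det_swapblocks, det_fromBlocks_zero₁₂, det_one, one_mul]

end Dets

section Main

variable {N : ℕ} (J : ℕ → Mx N) (A : ℕ → ℕ → Mx N)
  (hA1 : ∀ n, A n n = 1)
  (hA0 : ∀ n k, n < k → A n k = 0)
  (horthJ : ∀ n j, j < n → ee J (A n) n j = 0)
  (γ : ℕ → Mx N) (hγg : ∀ n, γ n * gv J A n = 1)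
  (hnd : ∀ d (c : ℕ → Mx N),
      (∑ j ∈ Finset.range (d+1), ∑ k ∈ Finset.range (d+1), c j * J (j+k) * (c k)ᴴ) = 0 →
      ∀ k, k ≤ d → c k = 0)

include hA1 hA0 horthJ hγg hnd in
theorem det_main : ∀ m (z : ℂ),
    (fromBlocks (pf (A (m+1)) (m+1) z) (Qval J (A (m+1)) (m+1) z)
      (pf (A m) m z) (Qval J (A m) m z)).det = (-1:ℂ)^N * (gv J A m).det := by
  intro m
  induction m with
  | zero =>
      intro z
      have hP0 : pf (A 0) 0 z = 1 := by
        rw [pf, Finset.sum_range_one, pow_zero, one_smul, hA1]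
      have hQ0 : Qval J (A 0) 0 z = 0 := by
        rw [Qval, Finset.sum_range_one, qq_top _ z (le_refl 0), zero_mul]
      have hQ1 : Qval J (A 1) 1 z = J 0 := by
        rw [Qval, Finset.sum_range_succ, Finset.sum_range_one,
          qq_top _ z (le_refl 1), zero_mul, add_zero]
        have : qq (A 1) 1 z 0 = 1 := by
          rw [qq, Finset.sum_range_one, pow_zero, one_smul,
            show 0+1+0 = 1 from rfl, hA1]
        rw [this, one_mul]
      have hgv0 : gv J A 0 = J 0 := by
        rw [gv, Finset.sum_range_one, Finset.sum_range_one, hA1,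
          Matrix.conjTranspose_one, one_mul, mul_one]
      rw [hP0, hQ0, hQ1, hgv0, det_AB10]
  | succ m ih =>
      intro z
      obtain ⟨B, C, hC, hrec⟩ := recurrence J A hA1 hA0 horthJ γ hγg hnd m
      have hblock : fromBlocks (pf (A (m+2)) (m+2) z) (Qval J (A (m+2)) (m+2) z)
            (pf (A (m+1)) (m+1) z) (Qval J (A (m+1)) (m+1) z)
          = fromBlocks (z • (1:Mx N) - B) (-C) 1 0
            * fromBlocks (pf (A (m+1)) (m+1) z) (Qval J (A (m+1)) (m+1) z)
              (pf (A m) m z) (Qval J (A m) m z) := by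
        have e1 : (z • (1:Mx N) - B) * pf (A (m+1)) (m+1) z + (-C) * pf (A m) m z
            = pf (A (m+2)) (m+2) z := by
          rw [sub_mul, smul_mul_assoc, one_mul, neg_mul, pf_rec A hA0 B C m hrec z]
          abel
        have e2 : (z • (1:Mx N) - B) * Qval J (A (m+1)) (m+1) z
            + (-C) * Qval J (A m) m z = Qval J (A (m+2)) (m+2) z := by
          rw [sub_mul, smul_mul_assoc, one_mul, neg_mul,
            qv_rec J A hA0 horthJ B C m hrec z]
          abel
        have e3 : (1:Mx N) * pf (A (m+1)) (m+1) z + (0:Mx N) * pf (A m) m z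
            = pf (A (m+1)) (m+1) z := by simp
        have e4 : (1:Mx N) * Qval J (A (m+1)) (m+1) z + (0:Mx N) * Qval J (A m) m z
            = Qval J (A (m+1)) (m+1) z := by simp
        rw [Matrix.fromBlocks_multiply, e1, e2, e3, e4]
      have hdetfac : (γ m).det * (gv J A m).det = 1 := by
        rw [← Matrix.det_mul, hγg m, Matrix.det_one]
      have hsq : ((-1:ℂ))^N * ((-1:ℂ))^N = 1 := by
        rw [← mul_pow]; norm_num
      rw [hblock, Matrix.det_mul, det_AB10, ih z, Matrix.det_neg, Fintype.card_fin,
        hC, Matrix.det_mul]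
      calc ((-1:ℂ)^N * ((-1:ℂ)^N * ((gv J A (m+1)).det * (γ m).det)))
            * ((-1:ℂ)^N * (gv J A m).det)
          = ((-1:ℂ)^N * (-1:ℂ)^N) * ((-1:ℂ)^N * ((gv J A (m+1)).det
              * ((γ m).det * (gv J A m).det))) := by ring
        _ = (-1:ℂ)^N * (gv J A (m+1)).det := by rw [hsq, hdetfac, one_mul, mul_one]

end Main

section MoreAux
variable {N : ℕ}

lemma pf_conjT (c : ℕ → Mx N) (d : ℕ) (x : ℝ) :
    (pf c d (x:ℂ))ᴴ = pf (fun k => (c k)ᴴ) d (x:ℂ) := by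
  rw [pf, pf, Matrix.conjTranspose_sum]
  refine Finset.sum_congr rfl fun j _ => ?_
  rw [Matrix.conjTranspose_smul]
  congr 1
  rw [Complex.star_def, map_pow, Complex.conj_ofReal]

lemma pf_delta (j : ℕ) (z : ℂ) :
    pf (fun k => if k = j then (1:Mx N) else 0) j z = z^j • 1 := by
  rw [pf]
  rw [Finset.sum_eq_single j (fun k _ hk => by simp [hk]) (by simp)]
  simp

end MoreAux
end Stmt5Aux

open Stmt5Aux in
theorem stmt5
    (N : ℕ) (hN : 1 ≤ N) (a b : ℝ) (hab : a < b)
    (W : ℝ → Matrix (Fin N) (Fin N) ℂ)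
    (hWcont : ContinuousOn W (Set.Ioo a b))
    (hWpos : ∀ x ∈ Set.Ioo a b, (W x).PosDef)
    (hWmom : ∀ (n : ℕ) (i j : Fin N),
      IntegrableOn (fun x : ℝ => |x| ^ n * ‖W x i j‖) (Set.Ioo a b))
    (hWnt : ∀ (d : ℕ) (c : Fin (d + 1) → Matrix (Fin N) (Fin N) ℂ), (∃ k, c k ≠ 0) →
      IsUnit (mint a b (fun x =>
        (∑ k : Fin (d + 1), ((x : ℂ) ^ (k : ℕ)) • c k) * W x * (∑ k : Fin (d + 1), ((x : ℂ) ^ (k : ℕ)) • c k)ᴴ)))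
    (aC : ℕ → ℤ → Matrix (Fin N) (Fin N) ℂ)
    (haDiag : ∀ n : ℕ, aC n n = 1)
    (haHigh : ∀ (n : ℕ) (j : ℤ), (n : ℤ) < j → aC n j = 0)
    (haLow : ∀ (n : ℕ) (j : ℤ), j < 0 → aC n j = 0)
    (P : ℕ → ℂ → Matrix (Fin N) (Fin N) ℂ)
    (hP : ∀ (n : ℕ) (z : ℂ), P n z = ∑ j ∈ Finset.range (n + 1), z ^ j • aC n j)
    (horth : ∀ n j : ℕ, j < n →
      mint a b (fun x => ((x : ℂ) ^ j) • (P n (x : ℂ) * W x)) = 0)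
    (γ : ℕ → Matrix (Fin N) (Fin N) ℂ)
    (hγ : ∀ n : ℕ, γ n * mint a b (fun x => P n (x : ℂ) * W x * (P n (x : ℂ))ᴴ) = 1)
    (κ : ℕ → Matrix (Fin N) (Fin N) ℂ)
    (hκu : ∀ n : ℕ, IsUnit (κ n))
    (hκ : ∀ n : ℕ, (κ n)ᴴ * κ n = γ n)
    (Pn : ℕ → ℂ → Matrix (Fin N) (Fin N) ℂ)
    (hPn : ∀ (n : ℕ) (z : ℂ), Pn n z = κ n * P n z)
    (Q : ℕ → ℂ → Matrix (Fin N) (Fin N) ℂ)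
    (hQ : ∀ (n : ℕ) (z : ℂ),
      Q n z = mint a b (fun t => ((t : ℂ) - z)⁻¹ • ((Pn n (t : ℂ) - Pn n z) * W t)))
 :
    ∀ n : ℕ, 1 ≤ n → ∀ z : ℂ,
      (Matrix.fromBlocks
          ((κ n)⁻¹ * Pn n z)
          ((2 * (Real.pi : ℂ) * Complex.I)⁻¹ • ((κ n)⁻¹ * Q n z))
          (-((2 * (Real.pi : ℂ) * Complex.I) • ((κ (n - 1))ᴴ * Pn (n - 1) z)))
          (-((κ (n - 1))ᴴ * Q (n - 1) z))).det = 1 := by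
  have hab' : a ≤ b := le_of_lt hab
  haveI : NeZero N := ⟨by omega⟩
  set A : ℕ → ℕ → Mx N := fun n k => aC n (k:ℤ) with hAdef
  set J : ℕ → Mx N := Jm a b W with hJdef
  have hA1 : ∀ n, A n n = 1 := fun n => haDiag n
  have hA0 : ∀ n k, n < k → A n k = 0 := fun n k h => haHigh n k (by exact_mod_cast h)
  have hPpf : ∀ n (z : ℂ), P n z = pf (A n) n z := by
    intro n z
    rw [hP, pf]
  -- translation of the orthogonality hypothesis
  have horthJ : ∀ n j, j < n → ee J (A n) n j = 0 := by
    intro n j hj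
    have heq : (fun x : ℝ => ((x:ℂ)^j) • (P n (x:ℂ) * W x))
        = fun x : ℝ => pf (A n) n (x:ℂ) * W x
            * pf (fun k => if k = j then (1:Mx N) else 0) j (x:ℂ) := by
      funext x
      rw [pf_delta, hPpf, mul_smul_comm, mul_one]
    have htr := mint_trans hWcont hWmom (A n) (fun k => if k = j then (1:Mx N) else 0)
      n j hab'
    rw [← heq] at htr
    rw [horth n j hj] at htr
    have : (0 : Mx N) = ∑ l ∈ Finset.range (n+1), A n l * J (l+j) := by
      rw [htr]
      refine Finset.sum_congr rfl fun l _ => ?_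
      rw [Finset.sum_eq_single j (fun k _ hk => by simp [hk]) (by simp)]
      simp [hJdef]
    rw [ee, ← this]
  -- translation of the normalization hypothesis
  have hγg : ∀ n, γ n * gv J A n = 1 := by
    intro n
    have heq : (fun x : ℝ => P n (x:ℂ) * W x * (P n (x:ℂ))ᴴ)
        = fun x : ℝ => pf (A n) n (x:ℂ) * W x * pf (fun k => (A n k)ᴴ) n (x:ℂ) := by
      funext x
      rw [hPpf, pf_conjT]
    have htr := mint_trans hWcont hWmom (A n) (fun k => (A n k)ᴴ) n n hab'
    rw [← heq] at htr
    have : mint a b (fun x : ℝ => P n (x:ℂ) * W x * (P n (x:ℂ))ᴴ) = gv J A n := by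
      rw [htr, gv]
    rw [← this, hγ n]
  -- nondegeneracy
  have hnd : ∀ d (c : ℕ → Mx N),
      (∑ j ∈ Finset.range (d+1), ∑ k ∈ Finset.range (d+1), c j * J (j+k) * (c k)ᴴ) = 0 →
      ∀ k, k ≤ d → c k = 0 := by
    intro d c hsum k hk
    by_contra hc
    have hunit := hWnt d (fun k : Fin (d+1) => c k) ⟨⟨k, by omega⟩, hc⟩
    have heq : (fun x : ℝ => (∑ k : Fin (d+1), ((x:ℂ)^(k:ℕ)) • c k) * W x
          * (∑ k : Fin (d+1), ((x:ℂ)^(k:ℕ)) • c k)ᴴ)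
        = fun x : ℝ => pf c d (x:ℂ) * W x * pf (fun k => (c k)ᴴ) d (x:ℂ) := by
      funext x
      rw [show (∑ k : Fin (d+1), ((x:ℂ)^(k:ℕ)) • c k) = pf c d (x:ℂ) from
        Fin.sum_univ_eq_sum_range (fun k => ((x:ℂ)^k) • c k) (d+1), pf_conjT]
    rw [heq, mint_trans hWcont hWmom c (fun k => (c k)ᴴ) d d hab', hsum] at hunit
    exact not_isUnit_zero hunit
  -- translation of the second-kind polynomials
  have hQtrans : ∀ n (z : ℂ), Q n z = κ n * Qval J (A n) n z := by
    intro n z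
    have hne : ∀ᵐ t : ℝ ∂(volume.restrict (Set.Ioo a b)), (t:ℂ) ≠ z := by
      apply ae_restrict_of_ae
      rw [MeasureTheory.ae_iff]
      refine measure_mono_null (fun t ht => ?_) (measure_singleton z.re)
      simp only [Set.mem_setOf_eq, not_not] at ht
      simp [show t = z.re from by rw [← ht]; rfl]
    have hae : ∀ᵐ t : ℝ ∂(volume.restrict (Set.Ioo a b)),
        ((t:ℂ) - z)⁻¹ • ((Pn n (t:ℂ) - Pn n z) * W t)
          = pf (fun k => κ n * qq (A n) n z k) n (t:ℂ) * W t
            * pf (fun k => if k = 0 then (1:Mx N) else 0) 0 (t:ℂ) := by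
      refine hne.mono fun t ht => ?_
      rw [pf_delta, pow_zero, one_smul, mul_one, pf_constMul]
      have hsub : Pn n (t:ℂ) - Pn n z = ((t:ℂ) - z) • (κ n * pf (qq (A n) n z) n (t:ℂ)) := by
        rw [hPn, hPn, ← mul_sub, hPpf, hPpf, pf_sub, mul_smul_comm]
      rw [hsub, smul_mul_assoc, smul_smul, inv_mul_cancel₀ (sub_ne_zero.mpr ht), one_smul]
    rw [hQ, mint_eq_SI hab', SI_congr_ae hae, ← mint_eq_SI hab',
      mint_trans hWcont hWmom (fun k => κ n * qq (A n) n z k)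
        (fun k => if k = 0 then (1:Mx N) else 0) n 0 hab']
    rw [Qval, Finset.mul_sum]
    refine Finset.sum_congr rfl fun k _ => ?_
    rw [Finset.sum_range_one]
    simp [hJdef, mul_assoc]
  -- main statement
  intro n hn z
  obtain ⟨m, rfl⟩ : ∃ m, n = m+1 := ⟨n-1, by omega⟩
  simp only [Nat.add_sub_cancel]
  have hκinv : (κ (m+1))⁻¹ * κ (m+1) = 1 :=
    Matrix.nonsing_inv_mul _ ((Matrix.isUnit_iff_isUnit_det _).mp (hκu _))
  have b11 : (κ (m+1))⁻¹ * Pn (m+1) z = pf (A (m+1)) (m+1) z := by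
    rw [hPn, ← mul_assoc, hκinv, one_mul, hPpf]
  have b12 : (κ (m+1))⁻¹ * Q (m+1) z = Qval J (A (m+1)) (m+1) z := by
    rw [hQtrans, ← mul_assoc, hκinv, one_mul]
  have b21 : (κ m)ᴴ * Pn m z = γ m * pf (A m) m z := by
    rw [hPn, ← mul_assoc, hκ, hPpf]
  have b22 : (κ m)ᴴ * Q m z = γ m * Qval J (A m) m z := by
    rw [hQtrans, ← mul_assoc, hκ]
  rw [b11, b12, b21, b22]
  set s : ℂ := 2 * (Real.pi : ℂ) * Complex.I with hs
  have hsne : s ≠ 0 := by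
    simp [hs, Real.pi_ne_zero, Complex.I_ne_zero, Complex.ofReal_ne_zero]
  set Pf2 := pf (A (m+1)) (m+1) z
  set Qv2 := Qval J (A (m+1)) (m+1) z
  set Pfm := pf (A m) m z
  set Qvm := Qval J (A m) m z
  have hfac : fromBlocks Pf2 (s⁻¹ • Qv2) (-(s • (γ m * Pfm))) (-(γ m * Qvm))
      = fromBlocks (1:Mx N) 0 0 ((-s) • γ m)
        * fromBlocks Pf2 Qv2 Pfm Qvm
        * fromBlocks (1:Mx N) 0 0 (s⁻¹ • (1:Mx N)) := by
    have step1 : fromBlocks (1:Mx N) 0 0 ((-s) • γ m) * fromBlocks Pf2 Qv2 Pfm Qvm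
        = fromBlocks Pf2 Qv2 ((-s) • (γ m * Pfm)) ((-s) • (γ m * Qvm)) := by
      rw [Matrix.fromBlocks_multiply,
        show (1:Mx N)*Pf2 + 0*Pfm = Pf2 by simp,
        show (1:Mx N)*Qv2 + 0*Qvm = Qv2 by simp,
        show (0:Mx N)*Pf2 + ((-s) • γ m)*Pfm = (-s) • (γ m * Pfm) by
          simp [smul_mul_assoc],
        show (0:Mx N)*Qv2 + ((-s) • γ m)*Qvm = (-s) • (γ m * Qvm) by
          simp [smul_mul_assoc]]
    have step2 : fromBlocks Pf2 Qv2 ((-s) • (γ m * Pfm)) ((-s) • (γ m * Qvm))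
        * fromBlocks (1:Mx N) 0 0 (s⁻¹ • (1:Mx N))
        = fromBlocks Pf2 (s⁻¹ • Qv2) (-(s • (γ m * Pfm))) (-(γ m * Qvm)) := by
      rw [Matrix.fromBlocks_multiply,
        show Pf2*(1:Mx N) + Qv2*0 = Pf2 by simp,
        show Pf2*0 + Qv2*(s⁻¹ • (1:Mx N)) = s⁻¹ • Qv2 by simp [mul_smul_comm],
        show ((-s) • (γ m * Pfm))*(1:Mx N) + ((-s) • (γ m * Qvm))*0
            = -(s • (γ m * Pfm)) by simp,
        show ((-s) • (γ m * Pfm))*0 + ((-s) • (γ m * Qvm))*(s⁻¹ • (1:Mx N))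
            = -(γ m * Qvm) by
          rw [mul_zero, zero_add, mul_smul_comm, mul_one, smul_smul, mul_neg,
            inv_mul_cancel₀ hsne]
          simp]
    rw [step1, step2]
  rw [hfac, Matrix.det_mul, Matrix.det_mul, det_fromBlocks_zero₂₁, det_fromBlocks_zero₂₁,
    det_main J A hA1 hA0 horthJ γ hγg hnd m z, Matrix.det_one, one_mul, one_mul,
    Matrix.det_smul, Matrix.det_smul, Matrix.det_one, Fintype.card_fin]
  have hdetfac : (γ m).det * (gv J A m).det = 1 := by
    rw [← Matrix.det_mul, hγg m, Matrix.det_one]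
  have hpow : (-s)^N * (s⁻¹)^N = (-1:ℂ)^N := by
    rw [← mul_pow]
    congr 1
    field_simp
  have hsq : ((-1:ℂ))^N * ((-1:ℂ))^N = 1 := by
    rw [← mul_pow]; norm_num
  calc (-s)^N * (γ m).det * ((-1:ℂ)^N * (gv J A m).det) * ((s⁻¹)^N * 1)
      = ((-s)^N * (s⁻¹)^N) * (-1:ℂ)^N * ((γ m).det * (gv J A m).det) := by ring
    _ = 1 := by rw [hpow, hsq, hdetfac, mul_one]
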